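/- Let 𝒜_1 be the 4-pattern whose squares are S_{0,j,4} for j = 0,1,2,3 together with S_{i,2,4} for i = 1,2,3, and let 𝒜_2 be the 5-pattern whose squares are S_{i,0,5} for i = 0,…,4 together with S_{1,j,5} for j = 1,…,4; set 𝒜_k = 𝒜_2 for all k ≥ 3. Then 𝒜_1 and 𝒜_2 are labyrinth patterns, the left exit of the resulting mixed labyrinth fractal L_∞ is the point (0, 1/2), and this point lies in exactly two squares of 𝒲_1 and in exactly one square of 𝒲_n for every n ≥ 2. -/

import Mathlib

open Set

namespace Labyrinth

/-- The closed square `S_{i,j,m} = [i/m,(i+1)/m] × [j/m,(j+1)/m]` of the `m × m` grid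
on the unit square, indexed by `p = (i,j)`. -/
def cell (m : ℕ) (p : ℕ × ℕ) : Set (ℝ × ℝ) :=
  Icc ((p.1 : ℝ) / (m : ℝ)) (((p.1 : ℝ) + 1) / (m : ℝ)) ×ˢ
    Icc ((p.2 : ℝ) / (m : ℝ)) (((p.2 : ℝ) + 1) / (m : ℝ))

/-- An `m`-pattern: a nonempty set of grid indices within the `m × m` grid. -/
def IsPattern (m : ℕ) (A : Set (ℕ × ℕ)) : Prop :=
  A.Nonempty ∧ ∀ p ∈ A, p.1 < m ∧ p.2 < m

/-- Two grid squares share a side. -/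
def SideAdj (p q : ℕ × ℕ) : Prop :=
  (p.1 = q.1 ∧ (p.2 + 1 = q.2 ∨ q.2 + 1 = p.2)) ∨
  (p.2 = q.2 ∧ (p.1 + 1 = q.1 ∨ q.1 + 1 = p.1))

/-- Two grid squares share a side or a corner. -/
def CornerAdj (p q : ℕ × ℕ) : Prop :=
  SideAdj p q ∨
  ((p.1 + 1 = q.1 ∨ q.1 + 1 = p.1) ∧ (p.2 + 1 = q.2 ∨ q.2 + 1 = p.2))

/-- The graph `𝒢(𝒜)` of a pattern: vertices are its squares, two squares being
adjacent iff they share a side. -/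
def patternGraph (A : Set (ℕ × ℕ)) : SimpleGraph ↥A where
  Adj p q := SideAdj p.1 q.1
  symm := by
    constructor
    rintro ⟨p, hp⟩ ⟨q, hq⟩ h
    rcases h with ⟨h1, h2⟩ | ⟨h1, h2⟩
    · exact Or.inl ⟨h1.symm, h2.symm⟩
    · exact Or.inr ⟨h1.symm, h2.symm⟩
  loopless := by
    constructor
    rintro ⟨p, hp⟩ h
    rcases h with ⟨h1, h2 | h2⟩ | ⟨h1, h2 | h2⟩ <;> omega

/-- The four sides of a square/pattern. -/
inductive Side | top | bottom | left | right
deriving DecidableEq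

/-- `p` is an exit square of the `m`-pattern `A` on the given side. -/
def IsExitSq (m : ℕ) (A : Set (ℕ × ℕ)) : Side → ℕ × ℕ → Prop
  | .top, p => p ∈ A ∧ p.2 = m - 1 ∧ (p.1, 0) ∈ A
  | .bottom, p => p ∈ A ∧ p.2 = 0 ∧ (p.1, m - 1) ∈ A
  | .left, p => p ∈ A ∧ p.1 = 0 ∧ (m - 1, p.2) ∈ A
  | .right, p => p ∈ A ∧ p.1 = m - 1 ∧ (0, p.2) ∈ A

/-- An `m × m`-labyrinth pattern: a nonempty `m`-pattern, `m ≥ 3`, whose graph is a tree,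
with exactly one vertical and exactly one horizontal exit pair, and no two white squares
at diagonally opposite corners. -/
def IsLabyrinthPattern (m : ℕ) (A : Set (ℕ × ℕ)) : Prop :=
  3 ≤ m ∧ IsPattern m A ∧ (patternGraph A).IsTree ∧
    (∃! i : ℕ, (i, m - 1) ∈ A ∧ (i, 0) ∈ A) ∧
    (∃! j : ℕ, (0, j) ∈ A ∧ (m - 1, j) ∈ A) ∧
    ((0, 0) ∈ A → (m - 1, m - 1) ∉ A) ∧
    ((m - 1, 0) ∈ A → (0, m - 1) ∉ A)

/-- A wild labyrinth pattern: the graph is merely connected, and there is at least one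
vertical and at least one horizontal exit pair. -/
def IsWildLabyrinthPattern (m : ℕ) (A : Set (ℕ × ℕ)) : Prop :=
  3 ≤ m ∧ IsPattern m A ∧ (patternGraph A).Connected ∧
    (∃ i : ℕ, (i, m - 1) ∈ A ∧ (i, 0) ∈ A) ∧
    (∃ j : ℕ, (0, j) ∈ A ∧ (m - 1, j) ∈ A) ∧
    ((0, 0) ∈ A → (m - 1, m - 1) ∉ A) ∧
    ((m - 1, 0) ∈ A → (0, m - 1) ∉ A)

/-- One substitution step: place a copy of the pattern `A'` (of width `m'`) into each
white square of `W`. -/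
def subst (m' : ℕ) (A' W : Set (ℕ × ℕ)) : Set (ℕ × ℕ) :=
  {q | ∃ p ∈ W, ∃ r ∈ A', q = (p.1 * m' + r.1, p.2 * m' + r.2)}

/-- The white squares `𝒲_n` of level `n`; `whites m A n` is the paper's `𝒲_n`, where
`A k` is the paper's pattern `𝒜_{k+1}` of width `m k = m_{k+1}`; level `0` is the whole
unit square. -/
def whites (m : ℕ → ℕ) (A : ℕ → Set (ℕ × ℕ)) : ℕ → Set (ℕ × ℕ)
  | 0 => {(0, 0)}
  | n + 1 => subst (m n) (A n) (whites m A n)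

/-- `m(n) = m_1 ⋯ m_n`. -/
def mProd (m : ℕ → ℕ) (n : ℕ) : ℕ := ∏ k ∈ Finset.range n, m k

/-- The black squares `ℬ_n` of level `n`. -/
def blacks (m : ℕ → ℕ) (A : ℕ → Set (ℕ × ℕ)) (n : ℕ) : Set (ℕ × ℕ) :=
  {p : ℕ × ℕ | p.1 < mProd m n ∧ p.2 < mProd m n} \ whites m A n

/-- A border square of the `m × m` grid. -/
def IsBorder (m : ℕ) (p : ℕ × ℕ) : Prop :=
  p.1 = 0 ∨ p.2 = 0 ∨ p.1 = m - 1 ∨ p.2 = m - 1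

/-- `L_n`, the union of the white squares of level `n`. -/
def levelSet (m : ℕ → ℕ) (A : ℕ → Set (ℕ × ℕ)) (n : ℕ) : Set (ℝ × ℝ) :=
  ⋃ p ∈ whites m A n, cell (mProd m n) p

/-- `L_∞ = ⋂_{n ≥ 1} L_n` (the term `n = 0` is the whole unit square). -/
def limitSet (m : ℕ → ℕ) (A : ℕ → Set (ℕ × ℕ)) : Set (ℝ × ℝ) :=
  ⋂ n, levelSet m A n

def unitSquare : Set (ℝ × ℝ) := Icc (0 : ℝ) 1 ×ˢ Icc (0 : ℝ) 1

/-- A path in a graph (with adjacency `Adj`, within the vertex set `A`)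
from `u` to `v`: a nonempty list of distinct, consecutively adjacent squares of `A`,
starting at `u` and ending at `v`. -/
def IsPathIn (Adj : ℕ × ℕ → ℕ × ℕ → Prop) (A : Set (ℕ × ℕ))
    (l : List (ℕ × ℕ)) (u v : ℕ × ℕ) : Prop :=
  l ≠ [] ∧ l.Nodup ∧ l.Chain' Adj ∧ (∀ p ∈ l, p ∈ A) ∧
    l.head? = some u ∧ l.getLast? = some v

/-- `s` is an arc between `a` and `b`: a homeomorphic image of `[0,1]`
with endpoints `a` and `b`. -/
def IsArc (s : Set (ℝ × ℝ)) (a b : ℝ × ℝ) : Prop :=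
  ∃ f : ℝ → ℝ × ℝ, ContinuousOn f (Icc 0 1) ∧ InjOn f (Icc 0 1) ∧
    f '' Icc 0 1 = s ∧ f 0 = a ∧ f 1 = b

/-- `e` is the exit point of `L_∞` of the given type: for every `n ≥ 1` it lies in the
exit square of that type of `𝒲_n`. -/
def IsExitPoint (m : ℕ → ℕ) (A : ℕ → Set (ℕ × ℕ)) (s : Side) (e : ℝ × ℝ) : Prop :=
  ∀ n, 1 ≤ n → ∃ p, IsExitSq (mProd m n) (whites m A n) s p ∧ e ∈ cell (mProd m n) p

/-- The (closed) edge of the grid square `p` of the `m × m` grid on the given side. -/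
def cellEdge (m : ℕ) (p : ℕ × ℕ) : Side → Set (ℝ × ℝ)
  | .top => Icc ((p.1 : ℝ) / (m : ℝ)) (((p.1 : ℝ) + 1) / (m : ℝ)) ×ˢ {((p.2 : ℝ) + 1) / (m : ℝ)}
  | .bottom => Icc ((p.1 : ℝ) / (m : ℝ)) (((p.1 : ℝ) + 1) / (m : ℝ)) ×ˢ {(p.2 : ℝ) / (m : ℝ)}
  | .left => {(p.1 : ℝ) / (m : ℝ)} ×ˢ Icc ((p.2 : ℝ) / (m : ℝ)) (((p.2 : ℝ) + 1) / (m : ℝ))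
  | .right => {((p.1 : ℝ) + 1) / (m : ℝ)} ×ˢ Icc ((p.2 : ℝ) / (m : ℝ)) (((p.2 : ℝ) + 1) / (m : ℝ))

/-- Directions in the grid. -/
inductive Dir | up | down | left | right
deriving DecidableEq

/-- `stepDir p q d`: the square `q` is the neighbour of `p` in direction `d`. -/
def stepDir (p q : ℕ × ℕ) : Dir → Prop
  | .up => q.1 = p.1 ∧ q.2 = p.2 + 1
  | .down => q.1 = p.1 ∧ p.2 = q.2 + 1
  | .left => q.2 = p.2 ∧ p.1 = q.1 + 1
  | .right => q.2 = p.2 ∧ q.1 = p.1 + 1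

/-- The outward direction through a given side. -/
def outDir : Side → Dir
  | .top => .up
  | .bottom => .down
  | .left => .left
  | .right => .right

def sideOfDir : Dir → Side
  | .up => .top
  | .down => .bottom
  | .left => .left
  | .right => .right

/-- The six types `A, B, C, D, E, F` of paths (and of squares within a path). -/
inductive PTy | A | B | C | D | E | F
deriving DecidableEq

instance : Fintype PTy :=
  ⟨{PTy.A, PTy.B, PTy.C, PTy.D, PTy.E, PTy.F}, by intro x; cases x <;> simp⟩

/-- The exit at which the `x`-path starts: `A`: top→bottom, `B`: left→right,
`C`: top→right, `D`: right→bottom, `E`: bottom→left, `F`: left→top. -/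
def startSide : PTy → Side
  | .A => .top
  | .B => .left
  | .C => .top
  | .D => .right
  | .E => .bottom
  | .F => .left

/-- The exit at which the `x`-path ends. -/
def endSide : PTy → Side
  | .A => .bottom
  | .B => .right
  | .C => .right
  | .D => .bottom
  | .E => .left
  | .F => .top

/-- The two neighbour directions characterising a square of each type. -/
def ptyDirPair : PTy → Dir × Dir
  | .A => (.up, .down)
  | .B => (.left, .right)
  | .C => (.up, .right)
  | .D => (.right, .down)
  | .E => (.down, .left)
  | .F => (.left, .up)

def ptyDirs (τ : PTy) : Set Dir := {(ptyDirPair τ).1, (ptyDirPair τ).2}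

/-- The set of directions from the `i`-th square of the path `l` towards its neighbours
within the path, where the first and last squares (exit squares) are regarded as having
an additional neighbour outside the unit square, in directions `dstart`, `dend`
respectively. -/
def pathDirs (l : List (ℕ × ℕ)) (dstart dend : Dir) (i : ℕ) : Set Dir :=
  {d | (∃ p q, l[i]? = some p ∧ l[i - 1]? = some q ∧ 0 < i ∧ stepDir p q d)
    ∨ (∃ p q, l[i]? = some p ∧ l[i + 1]? = some q ∧ stepDir p q d)
    ∨ (i = 0 ∧ d = dstart)
    ∨ (i + 1 = l.length ∧ d = dend)}

/-- The number of `τ`-squares of the path `l` (with outward exit directions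
`dstart`, `dend`). -/
noncomputable def countTy (l : List (ℕ × ℕ)) (dstart dend : Dir) (τ : PTy) : ℕ :=
  {i | i < l.length ∧ pathDirs l dstart dend i = ptyDirs τ}.ncard

/-- `M(n) = M_1 ⋅ M_2 ⋅ ⋯ ⋅ M_n`. -/
def matProd (M : ℕ → Matrix PTy PTy ℕ) (n : ℕ) : Matrix PTy PTy ℕ :=
  ((List.range n).map M).prod

/-- A simple closed curve: a subspace homeomorphic to the circle. -/
def IsSimpleClosedCurve (s : Set (ℝ × ℝ)) : Prop :=
  Nonempty (↥s ≃ₜ AddCircle (1 : ℝ))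

/-- The number of `δ`-mesh squares meeting `E`. -/
noncomputable def meshCount (δ : ℝ) (E : Set (ℝ × ℝ)) : ℕ :=
  {q : ℤ × ℤ | (E ∩ (Icc ((q.1 : ℝ) * δ) (((q.1 : ℝ) + 1) * δ) ×ˢ
      Icc ((q.2 : ℝ) * δ) (((q.2 : ℝ) + 1) * δ))).Nonempty}.ncard

/-- The lower box-counting dimension of `E ⊆ ℝ²`. -/
noncomputable def lowerBoxDim (E : Set (ℝ × ℝ)) : ℝ :=
  Filter.liminf (fun δ : ℝ => Real.log (meshCount δ E) / (-Real.log δ)) (nhdsWithin 0 (Ioi 0))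

/-- The upper box-counting dimension of `E ⊆ ℝ²`. -/
noncomputable def upperBoxDim (E : Set (ℝ × ℝ)) : ℝ :=
  Filter.limsup (fun δ : ℝ => Real.log (meshCount δ E) / (-Real.log δ)) (nhdsWithin 0 (Ioi 0))

end Labyrinth
namespace Labyrinth

/-- The `4`-pattern `𝒜_1` of the counterexample: the full left column together with the
squares `S_{i,2,4}`, `i = 1,2,3`. -/
def pat1 : Set (ℕ × ℕ) :=
  {p | (p.1 = 0 ∧ p.2 < 4) ∨ (p.2 = 2 ∧ 1 ≤ p.1 ∧ p.1 < 4)}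

/-- The `5`-pattern `𝒜_2` of the counterexample: the full bottom row together with the
squares `S_{1,j,5}`, `j = 1,…,4`. -/
def pat2 : Set (ℕ × ℕ) :=
  {p | (p.2 = 0 ∧ p.1 < 5) ∨ (p.1 = 1 ∧ 1 ≤ p.2 ∧ p.2 < 5)}

end Labyrinth

namespace Labyrinth

open SimpleGraph in
lemma isTree_of_parent' {V : Type*} {G : SimpleGraph V} (r : V) (par : V → V) (f : V → ℕ)
    (hr : par r = r)
    (h1 : ∀ v, v ≠ r → G.Adj v (par v))
    (hf : ∀ v, v ≠ r → f (par v) < f v)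
    (h2 : ∀ u v, G.Adj u v → par u = v ∨ par v = u) : G.IsTree := by
  have hreach : ∀ n (v : V), f v = n → G.Reachable v r := by
    intro n
    induction n using Nat.strong_induction_on with
    | _ n ih =>
      intro v hv
      by_cases hvr : v = r
      · subst hvr; exact Reachable.refl _
      · have hlt := hf v hvr
        rw [hv] at hlt
        exact ((h1 v hvr).reachable).trans (ih (f (par v)) hlt _ rfl)
  have hiterr : ∀ k, par^[k] r = r := fun k => Function.iterate_fixed hr k
  have hdesc : ∀ (u : V) (k : ℕ) (v : V), par^[k] v = u → u ≠ r → f u ≤ f v := by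
    intro u k
    induction k with
    | zero => intro v h _; rw [Function.iterate_zero_apply] at h; rw [h]
    | succ k ih =>
      intro v h hur
      rw [Function.iterate_succ_apply] at h
      by_cases hvr : v = r
      · subst hvr; rw [hr] at h; rw [hiterr k] at h; exact absurd h.symm hur
      · exact le_trans (ih (par v) h hur) (le_of_lt (hf v hvr))
  have hbridge : ∀ u v : V, G.Adj u v → par u = v → G.IsBridge s(u, v) := by
    intro u v hadj hpu
    have hur : u ≠ r := by
      rintro rfl
      rw [hr] at hpu
      exact hadj.ne hpu
    rw [isBridge_iff]
    rintro ⟨w⟩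
    have key : ∀ (x y : V), (G \ fromEdgeSet {s(u,v)}).Walk x y →
        (∃ k, par^[k] x = u) → ∃ k, par^[k] y = u := by
      intro x y w
      induction w with
      | nil => exact id
      | @cons x b y h p ih =>
        intro hx
        apply ih
        rw [sdiff_adj] at h
        obtain ⟨hG, hne⟩ := h
        rw [fromEdgeSet_adj] at hne
        push_neg at hne
        have hsne : s(x, b) ≠ s(u, v) := fun hs => hG.ne (hne hs)
        rcases h2 x b hG with hpx | hpb
        · by_cases hxu : x = u
          · subst hxu
            rw [hpu] at hpx
            exact absurd (by rw [hpx]) hsne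
          · obtain ⟨k, hk⟩ := hx
            cases k with
            | zero => rw [Function.iterate_zero_apply] at hk; exact absurd hk hxu
            | succ k =>
              rw [Function.iterate_succ_apply, hpx] at hk
              exact ⟨k, hk⟩
        · obtain ⟨k, hk⟩ := hx
          exact ⟨k + 1, by rw [Function.iterate_succ_apply, hpb, hk]⟩
    obtain ⟨k, hk⟩ := key u v w ⟨0, rfl⟩
    have h1' := hdesc u k v hk hur
    have h2' := hf u hur
    rw [hpu] at h2'
    omega
  constructor
  · rw [connected_iff]
    exact ⟨fun v w => ((hreach _ v rfl).trans (hreach _ w rfl).symm), ⟨r⟩⟩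
  · rw [isAcyclic_iff_forall_adj_isBridge]
    intro v w hadj
    rcases h2 v w hadj with hp | hp
    · exact hbridge v w hadj hp
    · rw [Sym2.eq_swap]
      exact hbridge w v hadj.symm hp

def par1fun (p : ℕ × ℕ) : ℕ × ℕ := if p.1 = 0 then (0, p.2 - 1) else (p.1 - 1, p.2)

lemma par1_mem {p : ℕ × ℕ} (hp : p ∈ pat1) : par1fun p ∈ pat1 := by
  obtain ⟨a, b⟩ := p
  simp only [pat1, Set.mem_setOf_eq] at hp
  simp only [par1fun]
  split_ifs with h <;> simp [pat1] <;> omega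

lemma pat1_tree : (patternGraph pat1).IsTree := by
  refine isTree_of_parent' ⟨(0,0), by simp [pat1]⟩
    (fun v => ⟨par1fun v.1, par1_mem v.2⟩) (fun v => v.1.1 + v.1.2) ?_ ?_ ?_ ?_
  · apply Subtype.ext
    simp [par1fun]
  · rintro ⟨⟨a, b⟩, hp⟩ hne
    have hab : ¬(a = 0 ∧ b = 0) := by
      rintro ⟨rfl, rfl⟩; exact hne (Subtype.ext rfl)
    show SideAdj (a, b) (par1fun (a, b))
    simp only [pat1, Set.mem_setOf_eq] at hp
    simp only [SideAdj, par1fun]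
    split_ifs with h <;> simp <;> omega
  · rintro ⟨⟨a, b⟩, hp⟩ hne
    have hab : ¬(a = 0 ∧ b = 0) := by
      rintro ⟨rfl, rfl⟩; exact hne (Subtype.ext rfl)
    simp only [pat1, Set.mem_setOf_eq] at hp
    simp only [par1fun]
    split_ifs with h <;> simp <;> omega
  · rintro ⟨⟨a, b⟩, hu⟩ ⟨⟨c, d⟩, hv⟩ hadj
    have hadj' : SideAdj (a, b) (c, d) := hadj
    simp only [pat1, Set.mem_setOf_eq] at hu hv
    simp only [SideAdj] at hadj'
    simp only [Subtype.mk.injEq, par1fun, Prod.mk.injEq]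
    split_ifs with h h' h' <;> simp at * <;> omega

def par2fun (p : ℕ × ℕ) : ℕ × ℕ := if p.2 = 0 then (p.1 - 1, 0) else (1, p.2 - 1)

lemma par2_mem {p : ℕ × ℕ} (hp : p ∈ pat2) : par2fun p ∈ pat2 := by
  obtain ⟨a, b⟩ := p
  simp only [pat2, Set.mem_setOf_eq] at hp
  simp only [par2fun]
  split_ifs with h <;> simp [pat2] <;> omega

lemma pat2_tree : (patternGraph pat2).IsTree := by
  refine isTree_of_parent' ⟨(0,0), by simp [pat2]⟩
    (fun v => ⟨par2fun v.1, par2_mem v.2⟩) (fun v => v.1.1 + v.1.2) ?_ ?_ ?_ ?_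
  · apply Subtype.ext
    simp [par2fun]
  · rintro ⟨⟨a, b⟩, hp⟩ hne
    have hab : ¬(a = 0 ∧ b = 0) := by
      rintro ⟨rfl, rfl⟩; exact hne (Subtype.ext rfl)
    show SideAdj (a, b) (par2fun (a, b))
    simp only [pat2, Set.mem_setOf_eq] at hp
    simp only [SideAdj, par2fun]
    split_ifs with h <;> simp <;> omega
  · rintro ⟨⟨a, b⟩, hp⟩ hne
    have hab : ¬(a = 0 ∧ b = 0) := by
      rintro ⟨rfl, rfl⟩; exact hne (Subtype.ext rfl)
    simp only [pat2, Set.mem_setOf_eq] at hp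
    simp only [par2fun]
    split_ifs with h <;> simp <;> omega
  · rintro ⟨⟨a, b⟩, hu⟩ ⟨⟨c, d⟩, hv⟩ hadj
    have hadj' : SideAdj (a, b) (c, d) := hadj
    simp only [pat2, Set.mem_setOf_eq] at hu hv
    simp only [SideAdj] at hadj'
    simp only [Subtype.mk.injEq, par2fun, Prod.mk.injEq]
    split_ifs with h h' h' <;> simp at * <;> omega

lemma mem_cell_iff {M K : ℕ} (hK : 1 ≤ K) (hM : M = 2 * K) {p : ℕ × ℕ} :
    ((0 : ℝ), (1 / 2 : ℝ)) ∈ cell M p ↔ p.1 = 0 ∧ (p.2 = K - 1 ∨ p.2 = K) := by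
  have hMpos : (0 : ℝ) < (M : ℝ) := by
    have : 0 < M := by omega
    exact_mod_cast this
  have hMcast : (M : ℝ) = 2 * (K : ℝ) := by rw [hM]; push_cast; ring
  simp only [cell, Set.mem_prod, Set.mem_Icc]
  rw [div_le_iff₀ hMpos, le_div_iff₀ hMpos, div_le_iff₀ hMpos, le_div_iff₀ hMpos]
  constructor
  · rintro ⟨⟨h1, h2⟩, h3, h4⟩
    have hp1 : (p.1 : ℝ) ≤ 0 := by linarith
    have hp1' : p.1 = 0 := by exact_mod_cast le_antisymm hp1 (Nat.cast_nonneg _)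
    rw [hMcast] at h3 h4
    have hp2 : (p.2 : ℝ) ≤ (K : ℝ) := by linarith
    have hp2' : (K : ℝ) ≤ (p.2 : ℝ) + 1 := by linarith
    have hb1 : p.2 ≤ K := by exact_mod_cast hp2
    have hb2 : K ≤ p.2 + 1 := by exact_mod_cast hp2'
    exact ⟨hp1', by omega⟩
  · rintro ⟨h1, h2⟩
    rw [h1, hMcast]
    rcases h2 with h2 | h2 <;> rw [h2]
    · have : ((K - 1 : ℕ) : ℝ) = (K : ℝ) - 1 := by
        rw [Nat.cast_sub hK]; norm_num
      rw [this]
      norm_num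
      constructor <;> nlinarith [hK, (by exact_mod_cast hK : (1:ℝ) ≤ (K:ℝ))]
    · norm_num
      constructor <;> nlinarith [(by exact_mod_cast hK : (1:ℝ) ≤ (K:ℝ))]

lemma pat1_lab : IsLabyrinthPattern 4 pat1 := by
  refine ⟨by norm_num, ⟨⟨(0,0), by simp [pat1]⟩, ?_⟩, pat1_tree, ⟨0, ⟨?_, ?_⟩, ?_⟩,
    ⟨2, ⟨?_, ?_⟩, ?_⟩, ?_, ?_⟩
  · rintro ⟨a, b⟩ hp
    simp only [pat1, Set.mem_setOf_eq] at hp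
    omega
  · simp [pat1]
  · simp [pat1]
  · rintro i ⟨h1, h2⟩
    simp only [pat1, Set.mem_setOf_eq] at h1 h2
    omega
  · simp [pat1]
  · simp [pat1]
  · rintro j ⟨h1, h2⟩
    simp only [pat1, Set.mem_setOf_eq] at h1 h2
    omega
  · intro _ h
    simp only [pat1, Set.mem_setOf_eq] at h
    omega
  · intro h
    simp only [pat1, Set.mem_setOf_eq] at h
    omega

lemma pat2_lab : IsLabyrinthPattern 5 pat2 := by
  refine ⟨by norm_num, ⟨⟨(0,0), by simp [pat2]⟩, ?_⟩, pat2_tree, ⟨1, ⟨?_, ?_⟩, ?_⟩,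
    ⟨0, ⟨?_, ?_⟩, ?_⟩, ?_, ?_⟩
  · rintro ⟨a, b⟩ hp
    simp only [pat2, Set.mem_setOf_eq] at hp
    omega
  · simp [pat2]
  · simp [pat2]
  · rintro i ⟨h1, h2⟩
    simp only [pat2, Set.mem_setOf_eq] at h1 h2
    omega
  · simp [pat2]
  · simp [pat2]
  · rintro j ⟨h1, h2⟩
    simp only [pat2, Set.mem_setOf_eq] at h1 h2
    omega
  · intro _ h
    simp only [pat2, Set.mem_setOf_eq] at h
    omega
  · intro _ h
    simp only [pat2, Set.mem_setOf_eq] at h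
    omega

end Labyrinth


open Labyrinth in
/-- for the sequence `𝒜_1 = pat1`, `𝒜_k = pat2` for `k ≥ 2`, both patterns
are labyrinth patterns, the left exit of the resulting mixed labyrinth fractal is
`(0, 1/2)`, and this point lies in exactly two squares of `𝒲_1` and in exactly one
square of `𝒲_n` for every `n ≥ 2`. -/
theorem left_exit_counterexample (m : ℕ → ℕ) (A : ℕ → Set (ℕ × ℕ))
    (hm0 : m 0 = 4) (hm : ∀ k, 1 ≤ k → m k = 5)
    (hA0 : A 0 = pat1) (hA : ∀ k, 1 ≤ k → A k = pat2) :
    IsLabyrinthPattern 4 pat1 ∧ IsLabyrinthPattern 5 pat2 ∧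
    IsExitPoint m A Side.left ((0 : ℝ), (1 / 2 : ℝ)) ∧
    {p ∈ whites m A 1 | ((0 : ℝ), (1 / 2 : ℝ)) ∈ cell (mProd m 1) p}.ncard = 2 ∧
    (∀ n, 2 ≤ n →
      {p ∈ whites m A n | ((0 : ℝ), (1 / 2 : ℝ)) ∈ cell (mProd m n) p}.ncard = 1) := by
  have hW1 : whites m A 1 = pat1 := by
    ext q
    simp only [whites, subst, Set.mem_setOf_eq, Set.mem_singleton_iff, hA0]
    constructor
    · rintro ⟨p, rfl, r, hr, rfl⟩
      simpa using hr
    · intro hq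
      exact ⟨(0, 0), rfl, q, hq, by simp⟩
  have hstep : ∀ n, 1 ≤ n → whites m A (n + 1) = subst 5 pat2 (whites m A n) := by
    intro n hn
    show subst (m n) (A n) (whites m A n) = _
    rw [hm n hn, hA n hn]
  have hM : ∀ k, mProd m (k + 1) = 4 * 5 ^ k := by
    intro k
    induction k with
    | zero => simp [mProd, hm0]
    | succ k ih =>
      have : mProd m (k + 2) = mProd m (k + 1) * m (k + 1) := Finset.prod_range_succ m (k + 1)
      rw [this, ih, hm (k + 1) (by omega), pow_succ]
      ring
  have h5 : ∀ k : ℕ, 1 ≤ 5 ^ k := fun k => Nat.one_le_pow _ _ (by norm_num)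
  have hP : ∀ k, (0, 2 * 5 ^ k) ∈ whites m A (k + 1) ∧
      (4 * 5 ^ k - 1, 2 * 5 ^ k) ∈ whites m A (k + 1) := by
    intro k
    induction k with
    | zero =>
      rw [hW1]
      constructor <;> simp [pat1]
    | succ k ih =>
      rw [hstep (k + 1) (by omega)]
      have hps : (5 : ℕ) ^ (k + 1) = 5 ^ k * 5 := pow_succ 5 k
      have h5k := h5 k
      constructor
      · refine ⟨(0, 2 * 5 ^ k), ih.1, (0, 0), by simp [pat2], ?_⟩
        simp only [Prod.mk.injEq, true_and]
        omega
      · refine ⟨(4 * 5 ^ k - 1, 2 * 5 ^ k), ih.2, (4, 0), by simp [pat2], ?_⟩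
        simp only [Prod.mk.injEq, true_and]
        omega
  have hQ : ∀ k, (0, 2 * 5 ^ (k + 1) - 1) ∉ whites m A (k + 2) := by
    intro k h
    rw [hstep (k + 1) (by omega)] at h
    simp only [subst, Set.mem_setOf_eq] at h
    obtain ⟨p, hp, r, hr, heq⟩ := h
    rw [Prod.mk.injEq] at heq
    obtain ⟨h1, h2⟩ := heq
    simp only [pat2, Set.mem_setOf_eq] at hr
    have hr1 : r.1 = 0 := by omega
    have hr2 : r.2 = 0 := by omega
    have hps : (5 : ℕ) ^ (k + 1) = 5 ^ k * 5 := pow_succ 5 k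
    have h5k := h5 k
    omega
  refine ⟨pat1_lab, pat2_lab, ?_, ?_, ?_⟩
  · intro n hn
    obtain ⟨k, rfl⟩ : ∃ k, n = k + 1 := ⟨n - 1, by omega⟩
    rw [hM k]
    refine ⟨(0, 2 * 5 ^ k), ⟨(hP k).1, rfl, ?_⟩, ?_⟩
    · show (4 * 5 ^ k - 1, 2 * 5 ^ k) ∈ whites m A (k + 1)
      exact (hP k).2
    · exact (mem_cell_iff (K := 2 * 5 ^ k) (by have := h5 k; omega) (by ring)).2
        ⟨rfl, Or.inr rfl⟩
  · have hcell : ∀ x y : ℕ, (((0 : ℝ), (1 / 2 : ℝ)) ∈ cell (4 * 5 ^ 0) ((x, y) : ℕ × ℕ)) ↔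
        (x = 0 ∧ (y = 2 - 1 ∨ y = 2)) :=
      fun x y => mem_cell_iff (M := 4 * 5 ^ 0) (K := 2) (by norm_num) (by norm_num)
    have hset : {p ∈ whites m A 1 | ((0 : ℝ), (1 / 2 : ℝ)) ∈ cell (mProd m 1) p} =
        {((0 : ℕ), (1 : ℕ)), ((0 : ℕ), (2 : ℕ))} := by
      ext ⟨x, y⟩
      rw [show mProd m 1 = 4 * 5 ^ 0 from hM 0]
      simp only [Set.mem_setOf_eq, Set.mem_insert_iff, Set.mem_singleton_iff, hW1,
        Prod.mk.injEq, hcell]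
      simp only [pat1, Set.mem_setOf_eq]
      omega
    rw [hset, Set.ncard_pair (by simp)]
  · intro n hn
    obtain ⟨k, rfl⟩ : ∃ k, n = k + 2 := ⟨n - 2, by omega⟩
    have hset : {p ∈ whites m A (k + 2) | ((0 : ℝ), (1 / 2 : ℝ)) ∈ cell (mProd m (k + 2)) p} =
        {((0 : ℕ), 2 * 5 ^ (k + 1))} := by
      have hcell : ∀ x y : ℕ, (((0 : ℝ), (1 / 2 : ℝ)) ∈ cell (4 * 5 ^ (k + 1)) ((x, y) : ℕ × ℕ)) ↔
          (x = 0 ∧ (y = 2 * 5 ^ (k + 1) - 1 ∨ y = 2 * 5 ^ (k + 1))) :=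
        fun x y => mem_cell_iff (M := 4 * 5 ^ (k + 1)) (K := 2 * 5 ^ (k + 1)) (by have := h5 (k + 1); omega) (by ring)
      ext ⟨x, y⟩
      rw [show mProd m (k + 2) = 4 * 5 ^ (k + 1) from hM (k + 1)]
      simp only [Set.mem_setOf_eq, Set.mem_singleton_iff, Prod.mk.injEq, hcell]
      constructor
      · rintro ⟨hw, h1, h2⟩
        refine ⟨h1, ?_⟩
        rcases h2 with h2 | h2
        · exfalso
          apply hQ k
          have : ((x : ℕ), (y : ℕ)) = (0, 2 * 5 ^ (k + 1) - 1) := by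
            rw [Prod.mk.injEq]; exact ⟨h1, h2⟩
          rw [← this]
          exact hw
        · exact h2
      · rintro ⟨rfl, rfl⟩
        exact ⟨(hP (k + 1)).1, rfl, Or.inr rfl⟩
    rw [hset, Set.ncard_singleton]
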